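/- Let ξ be real and for x = (x0,x1,x2) ∈ ℤ³ set ‖x‖ = max(|x0|,|x1|,|x2|) and L(x) = max(|x0ξ - x1|, |x0ξ² - x2|). Then for x, y ∈ ℤ³ and any indices r,s,t,u ∈ {0,1,2} with s - r = u - t, we have |x_r y_u - x_s y_t| ≤ C(ξ)·(‖x‖·L(y) + ‖y‖·L(x)) for a constant C(ξ) depending only on ξ. -/
import Mathlib


noncomputable def normT (x : Fin 3 → ℤ) : ℝ :=
  max (|(x 0 : ℝ)|) (max (|(x 1 : ℝ)|) (|(x 2 : ℝ)|))

noncomputable def Lf (ξ : ℝ) (x : Fin 3 → ℤ) : ℝ :=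
  max (|(x 0 : ℝ) * ξ - (x 1 : ℝ)|) (|(x 0 : ℝ) * ξ ^ 2 - (x 2 : ℝ)|)

private lemma mul2_bound {a b A B : ℝ} (ha : |a| ≤ A) (hb : |b| ≤ B) :
    |a * b| ≤ A * B := by
  have hA : 0 ≤ A := (abs_nonneg a).trans ha
  rw [abs_mul]
  exact mul_le_mul ha hb (abs_nonneg b) hA

private lemma mul3_bound {a b c A B C : ℝ} (ha : |a| ≤ A) (hb : |b| ≤ B) (hc : |c| ≤ C) :
    |a * b * c| ≤ A * B * C := by
  have hA : 0 ≤ A := (abs_nonneg a).trans ha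
  have hB : 0 ≤ B := (abs_nonneg b).trans hb
  rw [abs_mul, abs_mul]
  exact mul_le_mul (mul_le_mul ha hb (abs_nonneg b) hA) hc (abs_nonneg c) (mul_nonneg hA hB)

private lemma tri_sub (p q : ℝ) : |p - q| ≤ |p| + |q| := by
  rw [sub_eq_add_neg]
  exact (abs_add_le p (-q)).trans (by rw [abs_neg])

theorem minor_estimate (ξ : ℝ) :
    ∃ C : ℝ, 0 < C ∧ ∀ (x y : Fin 3 → ℤ) (r s t u : Fin 3),
      (s.val : ℤ) - (r.val : ℤ) = (u.val : ℤ) - (t.val : ℤ) →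
      |(x r * y u - x s * y t : ℤ)| ≤ C * (normT x * Lf ξ y + normT y * Lf ξ x) := by
  have habs0 : (0:ℝ) ≤ |ξ| := abs_nonneg ξ
  have hsq : (0:ℝ) ≤ ξ ^ 2 := sq_nonneg ξ
  set M : ℝ := 1 + |ξ| + ξ ^ 2 with hMdef
  have hM1 : (1:ℝ) ≤ M := by rw [hMdef]; linarith
  refine ⟨6 * M, by linarith, ?_⟩
  intro x y r s t u h
  have hnn : ∀ z : Fin 3 → ℤ, 0 ≤ normT z := fun z => (abs_nonneg _).trans (le_max_left _ _)
  have hLnn : ∀ z : Fin 3 → ℤ, 0 ≤ Lf ξ z := fun z => (abs_nonneg _).trans (le_max_left _ _)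
  have hcoord : ∀ (z : Fin 3 → ℤ) (i : Fin 3), |(z i : ℝ)| ≤ normT z := by
    intro z i
    fin_cases i
    · exact le_max_left _ _
    · exact le_trans (le_max_left _ _) (le_max_right _ _)
    · exact le_trans (le_max_right _ _) (le_max_right _ _)
  have hpowM : ∀ i : Fin 3, |ξ ^ (i.val : ℕ)| ≤ M := by
    intro i
    fin_cases i
    · simpa using hM1
    · simp only [pow_one]
      rw [hMdef]; linarith
    · rw [abs_pow, sq_abs, hMdef]; linarith
  have hd : ∀ (z : Fin 3 → ℤ) (i : Fin 3), |(z 0 : ℝ) * ξ ^ (i.val : ℕ) - (z i : ℝ)| ≤ Lf ξ z := by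
    intro z i
    fin_cases i
    · simpa using hLnn z
    · simp only [Lf, pow_one]
      exact le_max_left _ _
    · simp only [Lf]
      exact le_max_right _ _
  have hdK : ∀ (z : Fin 3 → ℤ) (i : Fin 3),
      |(z 0 : ℝ) * ξ ^ (i.val : ℕ) - (z i : ℝ)| ≤ (M + 1) * normT z := by
    intro z i
    have h1 := tri_sub ((z 0 : ℝ) * ξ ^ (i.val : ℕ)) ((z i : ℝ))
    have h2 : |(z 0 : ℝ) * ξ ^ (i.val : ℕ)| ≤ normT z * M := mul2_bound (hcoord z 0) (hpowM i)
    have h3 := hcoord z i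
    nlinarith [hnn z]
  have hpow : ξ ^ (r.val : ℕ) * ξ ^ (u.val : ℕ) = ξ ^ (s.val : ℕ) * ξ ^ (t.val : ℕ) := by
    rw [← pow_add, ← pow_add]
    congr 1
    omega
  set A := (x 0 : ℝ) * ξ ^ (r.val : ℕ) * ((y 0 : ℝ) * ξ ^ (u.val : ℕ) - (y u : ℝ)) with hA
  set B := (y 0 : ℝ) * ξ ^ (u.val : ℕ) * ((x 0 : ℝ) * ξ ^ (r.val : ℕ) - (x r : ℝ)) with hB
  set Cc := ((x 0 : ℝ) * ξ ^ (r.val : ℕ) - (x r : ℝ)) * ((y 0 : ℝ) * ξ ^ (u.val : ℕ) - (y u : ℝ)) with hC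
  set D := (x 0 : ℝ) * ξ ^ (s.val : ℕ) * ((y 0 : ℝ) * ξ ^ (t.val : ℕ) - (y t : ℝ)) with hD
  set E := (y 0 : ℝ) * ξ ^ (t.val : ℕ) * ((x 0 : ℝ) * ξ ^ (s.val : ℕ) - (x s : ℝ)) with hE
  set F := ((x 0 : ℝ) * ξ ^ (s.val : ℕ) - (x s : ℝ)) * ((y 0 : ℝ) * ξ ^ (t.val : ℕ) - (y t : ℝ)) with hF
  have key : ((x r : ℝ) * (y u : ℝ) - (x s : ℝ) * (y t : ℝ)) = -A - B + Cc + D + E - F := by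
    rw [hA, hB, hC, hD, hE, hF]
    linear_combination ((x 0 : ℝ) * (y 0 : ℝ)) * hpow
  have tA : |A| ≤ normT x * M * Lf ξ y := mul3_bound (hcoord x 0) (hpowM r) (hd y u)
  have tB : |B| ≤ normT y * M * Lf ξ x := mul3_bound (hcoord y 0) (hpowM u) (hd x r)
  have tC : |Cc| ≤ Lf ξ x * ((M + 1) * normT y) := mul2_bound (hd x r) (hdK y u)
  have tD : |D| ≤ normT x * M * Lf ξ y := mul3_bound (hcoord x 0) (hpowM s) (hd y t)
  have tE : |E| ≤ normT y * M * Lf ξ x := mul3_bound (hcoord y 0) (hpowM t) (hd x s)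
  have tF : |F| ≤ Lf ξ x * ((M + 1) * normT y) := mul2_bound (hd x s) (hdK y t)
  have goalcast : ((|x r * y u - x s * y t| : ℤ) : ℝ) = |(x r : ℝ) * (y u : ℝ) - (x s : ℝ) * (y t : ℝ)| := by
    push_cast
    ring_nf
  rw [goalcast, key]
  have h1 := tri_sub (-A - B + Cc + D + E) F
  have h2 := abs_add_le (-A - B + Cc + D) E
  have h3 := abs_add_le (-A - B + Cc) D
  have h4 := abs_add_le (-A - B) Cc
  have h5 := tri_sub (-A) B
  have h6 : |(-A : ℝ)| = |A| := abs_neg A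
  have hXLy : 0 ≤ normT x * Lf ξ y := mul_nonneg (hnn x) (hLnn y)
  have hYLx : 0 ≤ normT y * Lf ξ x := mul_nonneg (hnn y) (hLnn x)
  nlinarith [hM1, hXLy, hYLx]
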